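/- Let M be a symmetric positive definite n×n matrix with smallest eigenvalue λ_min > 0, and let x₁, x₂ ∈ ℝⁿ be zeros of F(x) = (M+I)x + (M−I)|x| + q. Then x₁ = x₂. -/

import Mathlib

open Matrix

theorem stmt_14 {n : ℕ} (M : Matrix (Fin n) (Fin n) ℝ)
    (hsymm : M.IsSymm) (hpd : M.PosDef) (lammin : ℝ) (hlam : 0 < lammin)
    (hmin : ∀ μ ∈ spectrum ℝ M, lammin ≤ μ) (q x₁ x₂ : Fin n → ℝ)
    (h1 : (M + 1).mulVec x₁ + (M - 1).mulVec (fun i => |x₁ i|) + q = 0)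
    (h2 : (M + 1).mulVec x₂ + (M - 1).mulVec (fun i => |x₂ i|) + q = 0) :
    x₁ = x₂ := by
  set a₁ : Fin n → ℝ := fun i => |x₁ i| with ha₁
  set a₂ : Fin n → ℝ := fun i => |x₂ i| with ha₂
  set d : Fin n → ℝ := x₁ - x₂ with hd
  set e : Fin n → ℝ := a₁ - a₂ with he
  have heq : (M + 1).mulVec d + (M - 1).mulVec e = 0 := by
    rw [hd, he, Matrix.mulVec_sub, Matrix.mulVec_sub]
    have : ((M + 1).mulVec x₁ + (M - 1).mulVec a₁ + q)
         - ((M + 1).mulVec x₂ + (M - 1).mulVec a₂ + q) = 0 := by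
      rw [h1, h2, sub_zero]
    calc (M + 1).mulVec x₁ - (M + 1).mulVec x₂ + ((M - 1).mulVec a₁ - (M - 1).mulVec a₂)
        = ((M + 1).mulVec x₁ + (M - 1).mulVec a₁ + q)
         - ((M + 1).mulVec x₂ + (M - 1).mulVec a₂ + q) := by abel
      _ = 0 := this
  -- key scalar identity
  have hsymM : ∀ u v : Fin n → ℝ, u ⬝ᵥ M.mulVec v = v ⬝ᵥ M.mulVec u := by
    intro u v
    rw [Matrix.dotProduct_mulVec, ← Matrix.mulVec_transpose, hsymm.eq, dotProduct_comm]
  have hkey : (d ⬝ᵥ d - e ⬝ᵥ e) + (d + e) ⬝ᵥ M.mulVec (d + e) = 0 := by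
    have h0 : (d + e) ⬝ᵥ ((M + 1).mulVec d + (M - 1).mulVec e) = 0 := by
      rw [heq, dotProduct_zero]
    rw [Matrix.add_mulVec, Matrix.sub_mulVec, Matrix.one_mulVec, Matrix.one_mulVec] at h0
    rw [Matrix.mulVec_add]
    simp only [dotProduct_add, add_dotProduct, dotProduct_sub, sub_dotProduct] at h0 ⊢
    rw [hsymM e d] at h0 ⊢
    rw [dotProduct_comm e d] at h0
    linarith
  have hA : 0 ≤ d ⬝ᵥ d - e ⬝ᵥ e := by
    rw [sub_nonneg]
    apply Finset.sum_le_sum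
    intro i _
    have h1 : |e i| ≤ |d i| := by
      simp only [he, hd, ha₁, ha₂, Pi.sub_apply]
      exact abs_abs_sub_abs_le_abs_sub _ _
    have := mul_self_le_mul_self (abs_nonneg (e i)) h1
    simpa [abs_mul_abs_self] using this
  have hB : 0 ≤ (d + e) ⬝ᵥ M.mulVec (d + e) := by
    have := hpd.posSemidef.dotProduct_mulVec_nonneg (d + e)
    simpa using this
  have hde : d + e = 0 := by
    by_contra hne
    have := hpd.dotProduct_mulVec_pos hne
    simp only [star_trivial] at this
    have : (0:ℝ) < (d + e) ⬝ᵥ M.mulVec (d + e) := by simpa using this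
    linarith
  have he' : e = -d := by
    have := hde
    rw [add_eq_zero_iff_neg_eq] at this
    exact this.symm
  have hd0 : d = 0 := by
    rw [he'] at heq
    have : (2 : ℝ) • d = 0 := by
      have h2 : (M + 1).mulVec d + (M - 1).mulVec (-d) = (2:ℝ) • d := by
        rw [Matrix.mulVec_neg, Matrix.add_mulVec, Matrix.sub_mulVec, Matrix.one_mulVec]
        funext i
        simp [two_smul]
        ring
      rw [← h2, heq]
    have := smul_eq_zero.mp this
    rcases this with h | h
    · norm_num at h
    · exact h
  have := sub_eq_zero.mp (hd ▸ hd0 : x₁ - x₂ = 0)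
  exact this
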